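/- Let 𝔤 and 𝔥 be finite-dimensional Lie algebras, with a linear action • of 𝔥 on 𝔤 and a linear action ρ̇ of 𝔤 on 𝔥, satisfying the matched pair conditions: τ•[ξ₁,ξ₂] = [τ•ξ₁,ξ₂] − [τ•ξ₂,ξ₁] − ρ̇(ξ₁)(τ)•ξ₂ + ρ̇(ξ₂)(τ)•ξ₁ and ρ̇(ξ)([τ₁,τ₂]) = [ρ̇(ξ)(τ₁),τ₂] − [ρ̇(ξ)(τ₂),τ₁] − ρ̇(τ₁•ξ)(τ₂) + ρ̇(τ₂•ξ)(τ₁) for all ξ, ξᵢ ∈ 𝔤 and τ, τᵢ ∈ 𝔥. Then the vector space 𝔡 = 𝔤 ⊕ 𝔥 carries a unique Lie bracket such that 𝔤 and 𝔥 are Lie subalgebras and [ξ, τ] = ρ̇(ξ)(τ) − τ•ξ for ξ ∈ 𝔤, τ ∈ 𝔥. -/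
import Mathlib


/-- A matched pair of Lie algebras `(𝔤, 𝔥)`: a representation `act` of `𝔥` on `𝔤`
and a representation `rho` of `𝔤` on `𝔥` satisfying the two compatibility
conditions.  Then `𝔡 = 𝔤 ⊕ 𝔥` carries a unique Lie bracket (a bilinear map which
is antisymmetric and satisfies the Jacobi identity) such that `𝔤` and `𝔥` are Lie
subalgebras and `[ξ, τ] = ρ̇(ξ)(τ) − τ•ξ` for `ξ ∈ 𝔤`, `τ ∈ 𝔥`. -/
theorem matched_pair_double {K G H : Type*} [Field K]
    [LieRing G] [LieAlgebra K G] [LieRing H] [LieAlgebra K H]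
    (act : H →ₗ[K] G →ₗ[K] G)
    (hact : ∀ (τ₁ τ₂ : H) (ξ : G),
      act ⁅τ₁, τ₂⁆ ξ = act τ₁ (act τ₂ ξ) - act τ₂ (act τ₁ ξ))
    (rho : G →ₗ[K] H →ₗ[K] H)
    (hrho : ∀ (ξ₁ ξ₂ : G) (τ : H),
      rho ⁅ξ₁, ξ₂⁆ τ = rho ξ₁ (rho ξ₂ τ) - rho ξ₂ (rho ξ₁ τ))
    (hm1 : ∀ (τ : H) (ξ₁ ξ₂ : G),
      act τ ⁅ξ₁, ξ₂⁆ = ⁅act τ ξ₁, ξ₂⁆ - ⁅act τ ξ₂, ξ₁⁆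
        - act (rho ξ₁ τ) ξ₂ + act (rho ξ₂ τ) ξ₁)
    (hm2 : ∀ (ξ : G) (τ₁ τ₂ : H),
      rho ξ ⁅τ₁, τ₂⁆ = ⁅rho ξ τ₁, τ₂⁆ - ⁅rho ξ τ₂, τ₁⁆
        - rho (act τ₁ ξ) τ₂ + rho (act τ₂ ξ) τ₁) :
    ∃! Br : (G × H) →ₗ[K] (G × H) →ₗ[K] (G × H),
      (∀ x y : G × H, Br x y = -Br y x) ∧
      (∀ x y z : G × H, Br x (Br y z) = Br (Br x y) z + Br y (Br x z)) ∧
      (∀ ξ₁ ξ₂ : G, Br (ξ₁, (0 : H)) (ξ₂, (0 : H)) = (⁅ξ₁, ξ₂⁆, (0 : H))) ∧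
      (∀ τ₁ τ₂ : H, Br ((0 : G), τ₁) ((0 : G), τ₂) = ((0 : G), ⁅τ₁, τ₂⁆)) ∧
      (∀ (ξ : G) (τ : H), Br (ξ, (0 : H)) ((0 : G), τ) = (-(act τ ξ), rho ξ τ)) := by
  have flipG : ∀ (τ : H) (a b : G), ⁅a, act τ b⁆ = -⁅act τ b, a⁆ := by
    intro τ a b; rw [← lie_skew]
  have flipH : ∀ (ξ : G) (p q : H), ⁅p, rho ξ q⁆ = -⁅rho ξ q, p⁆ := by
    intro ξ p q; rw [← lie_skew]
  set Br : (G × H) →ₗ[K] (G × H) →ₗ[K] (G × H) :=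
    LinearMap.mk₂ K
      (fun x y => (⁅x.1, y.1⁆ + act x.2 y.1 - act y.2 x.1,
                   ⁅x.2, y.2⁆ + rho x.1 y.2 - rho y.1 x.2))
      (by intro m₁ m₂ n
          simp only [Prod.fst_add, Prod.snd_add, add_lie, map_add, LinearMap.add_apply,
            Prod.mk_add_mk, Prod.mk.injEq]
          constructor <;> abel)
      (by intro c m n
          simp only [Prod.smul_fst, Prod.smul_snd, smul_lie, map_smul, LinearMap.smul_apply,
            Prod.smul_mk, smul_add, smul_sub])
      (by intro m n₁ n₂
          simp only [Prod.fst_add, Prod.snd_add, lie_add, map_add, LinearMap.add_apply,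
            Prod.mk_add_mk, Prod.mk.injEq]
          constructor <;> abel)
      (by intro c m n
          simp only [Prod.smul_fst, Prod.smul_snd, lie_smul, map_smul, LinearMap.smul_apply,
            Prod.smul_mk, smul_add, smul_sub]) with hBr
  have hBrApp : ∀ x y : G × H, Br x y = (⁅x.1, y.1⁆ + act x.2 y.1 - act y.2 x.1,
      ⁅x.2, y.2⁆ + rho x.1 y.2 - rho y.1 x.2) := fun x y => rfl
  refine ⟨Br, ⟨?_, ?_, ?_, ?_, ?_⟩, ?_⟩
  · intro x y
    simp only [hBrApp, Prod.neg_mk, Prod.mk.injEq]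
    constructor
    · rw [← lie_skew]; abel
    · rw [← lie_skew]; abel
  · intro x y z
    simp only [hBrApp, Prod.mk_add_mk, Prod.mk.injEq]
    constructor
    · simp only [lie_add, lie_sub, add_lie, sub_lie, map_add, map_sub, map_neg,
        LinearMap.add_apply, LinearMap.sub_apply, LinearMap.neg_apply,
        hact, hm1, lie_lie, flipG]
      abel
    · simp only [lie_add, lie_sub, add_lie, sub_lie, map_add, map_sub, map_neg,
        LinearMap.add_apply, LinearMap.sub_apply, LinearMap.neg_apply,
        hrho, hm2, lie_lie, flipH]
      abel
  · intro ξ₁ ξ₂; simp [hBrApp]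
  · intro τ₁ τ₂; simp [hBrApp]
  · intro ξ τ; simp [hBrApp]
  · rintro Br' ⟨hskew, _, hGG, hHH, hGH⟩
    have hHG : ∀ (τ : H) (ξ : G), Br' ((0 : G), τ) (ξ, (0 : H)) = (act τ ξ, -(rho ξ τ)) := by
      intro τ ξ
      rw [hskew, hGH]
      simp
    refine LinearMap.ext fun x => LinearMap.ext fun y => ?_
    obtain ⟨a, p⟩ := x
    obtain ⟨b, q⟩ := y
    have ha : ((a, p) : G × H) = (a, 0) + (0, p) := by simp
    have hb : ((b, q) : G × H) = (b, 0) + (0, q) := by simp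
    rw [ha, hb]
    simp only [map_add, LinearMap.add_apply, hGG, hHH, hGH, hHG, hBrApp]
    simp only [Prod.mk_add_mk, Prod.mk.injEq]
    constructor <;> simp
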